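/- There exists a skew brace A whose additive group A_⊕ is abelian but whose multiplicative group A_⊙ is not solvable. (For example, the direct sum over n = 2, 3, … of the skew braces on the strictly upper triangular integer matrices U_n with A ⊕ B = A + B and A ⊙ B = (Iₙ + A)(Iₙ + B) − Iₙ has additive group a free abelian group and multiplicative group the direct sum of the groups UTₙ(ℤ), which is not solvable.) -/

import Mathlib

open Matrix Finset
open scoped commutatorElement

/-! Auxiliary construction: strictly upper triangular integer matrices with the
"circle" (adjoint) group operation `a ∘ b = a + b + a * b`. -/

/-- Strict upper triangularity predicate. -/
def Su {n : ℕ} (M : Matrix (Fin n) (Fin n) ℤ) : Prop :=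
  ∀ i j : Fin n, (j : ℕ) ≤ (i : ℕ) → M i j = 0

theorem Su.add {n : ℕ} {M N : Matrix (Fin n) (Fin n) ℤ} (hM : Su M) (hN : Su N) :
    Su (M + N) := fun i j h => by simp [hM i j h, hN i j h]

theorem Su.neg {n : ℕ} {M : Matrix (Fin n) (Fin n) ℤ} (hM : Su M) : Su (-M) :=
  fun i j h => by simp [hM i j h]

theorem Su.zero {n : ℕ} : Su (0 : Matrix (Fin n) (Fin n) ℤ) := fun _ _ _ => rfl

theorem Su.mul {n : ℕ} {M N : Matrix (Fin n) (Fin n) ℤ} (hM : Su M) (hN : Su N) :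
    Su (M * N) := by
  intro i j h
  rw [Matrix.mul_apply]
  refine Finset.sum_eq_zero fun m _ => ?_
  rcases le_or_gt (m : ℕ) (i : ℕ) with hm | hm
  · rw [hM i m hm, zero_mul]
  · rw [hN m j (h.trans hm.le), mul_zero]

theorem Su.pow {n : ℕ} {M : Matrix (Fin n) (Fin n) ℤ} (hM : Su M) (k : ℕ) :
    Su (M ^ (k + 1)) := by
  induction k with
  | zero => simpa using hM
  | succ k ih => rw [pow_succ]; exact ih.mul hM

theorem Su.pow_apply {n : ℕ} {M : Matrix (Fin n) (Fin n) ℤ} (hM : Su M) :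
    ∀ (k : ℕ) (i j : Fin n), (j : ℕ) < (i : ℕ) + k → (M ^ k) i j = 0 := by
  intro k
  induction k with
  | zero =>
    intro i j h
    have : i ≠ j := by intro e; subst e; omega
    rw [pow_zero]
    exact Matrix.one_apply_ne this
  | succ k ih =>
    intro i j h
    rw [pow_succ, Matrix.mul_apply]
    refine Finset.sum_eq_zero fun m _ => ?_
    rcases lt_or_ge (m : ℕ) ((i : ℕ) + k) with hm | hm
    · rw [ih i m hm, zero_mul]
    · rw [hM m j (by omega), mul_zero]

theorem Su.pow_self {n : ℕ} {M : Matrix (Fin n) (Fin n) ℤ} (hM : Su M) :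
    M ^ n = 0 := by
  ext i j
  exact hM.pow_apply n i j (by omega) |>.trans rfl

/-- The type of strictly upper triangular `n × n` integer matrices. -/
def Tg (n : ℕ) : Type := { M : Matrix (Fin n) (Fin n) ℤ // Su M }

namespace Tg

variable {n : ℕ}

theorem ext {a b : Tg n} (h : a.1 = b.1) : a = b := Subtype.ext h

instance : Add (Tg n) := ⟨fun a b => ⟨a.1 + b.1, a.2.add b.2⟩⟩
instance : Zero (Tg n) := ⟨⟨0, Su.zero⟩⟩
instance : Neg (Tg n) := ⟨fun a => ⟨-a.1, a.2.neg⟩⟩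

instance : AddCommGroup (Tg n) where
  add_assoc a b c := ext (add_assoc a.1 b.1 c.1)
  zero_add a := ext (zero_add a.1)
  add_zero a := ext (add_zero a.1)
  neg_add_cancel a := ext (neg_add_cancel a.1)
  add_comm a b := ext (add_comm a.1 b.1)
  nsmul := nsmulRec
  zsmul := zsmulRec

@[simp] theorem add_val (a b : Tg n) : (a + b).1 = a.1 + b.1 := rfl
@[simp] theorem neg_val (a : Tg n) : (-a).1 = -a.1 := rfl
@[simp] theorem zero_val : ((0 : Tg n)).1 = 0 := rfl

instance : Mul (Tg n) := ⟨fun a b => ⟨a.1 + b.1 + a.1 * b.1, (a.2.add b.2).add (a.2.mul b.2)⟩⟩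
instance : One (Tg n) := ⟨⟨0, Su.zero⟩⟩
instance : Inv (Tg n) := ⟨fun a => ⟨∑ k ∈ Finset.range n, (-a.1) ^ (k + 1), by
    intro i j h
    refine (Matrix.sum_apply i j _ _).trans ?_
    exact Finset.sum_eq_zero fun k _ => (a.2.neg.pow k) i j h⟩⟩

instance : Group (Tg n) where
  mul_assoc a b c := by
    apply ext
    show (a.1 + b.1 + a.1 * b.1) + c.1 + (a.1 + b.1 + a.1 * b.1) * c.1
        = a.1 + (b.1 + c.1 + b.1 * c.1) + a.1 * (b.1 + c.1 + b.1 * c.1)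
    noncomm_ring
  one_mul a := by apply ext; show 0 + a.1 + 0 * a.1 = a.1; noncomm_ring
  mul_one a := by apply ext; show a.1 + 0 + a.1 * 0 = a.1; noncomm_ring
  inv_mul_cancel a := by
    apply ext
    set M := a.1 with hM
    show (∑ k ∈ Finset.range n, (-M) ^ (k + 1)) + M
        + (∑ k ∈ Finset.range n, (-M) ^ (k + 1)) * M = 0
    have h1 : (∑ k ∈ Finset.range n, (-M) ^ (k + 1)) * M
        = -∑ k ∈ Finset.range n, (-M) ^ (k + 1 + 1) := by
      rw [Finset.sum_mul, ← Finset.sum_neg_distrib]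
      refine Finset.sum_congr rfl fun k _ => ?_
      rw [pow_succ (-M) (k + 1), mul_neg, neg_neg]
    have h2 : (∑ k ∈ Finset.range n, ((-M) ^ (k + 1) - (-M) ^ (k + 1 + 1)))
        = (-M) ^ (0 + 1) - (-M) ^ (n + 1) :=
      Finset.sum_range_sub' (fun k => (-M) ^ (k + 1)) n
    have h3 : (-M) ^ (n + 1) = 0 := by
      rw [pow_succ, neg_pow, a.2.pow_self]
      simp
    rw [h1]
    have := h2
    rw [Finset.sum_sub_distrib] at this
    rw [sub_eq_iff_eq_add] at this
    calc (∑ k ∈ Finset.range n, (-M) ^ (k + 1)) + M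
          + -∑ k ∈ Finset.range n, (-M) ^ (k + 1 + 1)
        = ((-M) ^ (0 + 1) - (-M) ^ (n + 1) + ∑ k ∈ Finset.range n, (-M) ^ (k + 1 + 1)) + M
          + -∑ k ∈ Finset.range n, (-M) ^ (k + 1 + 1) := by rw [← this]
      _ = 0 := by rw [h3]; ring_nf; simp

@[simp] theorem mul_val (a b : Tg n) : (a * b).1 = a.1 + b.1 + a.1 * b.1 := rfl
@[simp] theorem one_val : ((1 : Tg n)).1 = 0 := rfl

/-- The single-entry element `e i j`. -/
def e (i j : Fin n) (h : (i : ℕ) < (j : ℕ)) : Tg n :=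
  ⟨Matrix.single i j 1, by
    intro i' j' hle
    rw [Matrix.single]
    show (if i = i' ∧ j = j' then (1:ℤ) else 0) = 0
    rcases Decidable.em (i = i' ∧ j = j') with ⟨rfl, rfl⟩ | hne
    · omega
    · simp [hne]⟩

theorem commutator_e {i m j : Fin n} (him : (i : ℕ) < m) (hmj : (m : ℕ) < j) :
    ⁅e i m him, e m j hmj⁆ = e i j (him.trans hmj) := by
  have hij : i ≠ j := by intro h; rw [h] at him; omega
  have hji : (j : ℕ) ≠ (i : ℕ) := by omega
  have hjm : (j : ℕ) ≠ (m : ℕ) := by omega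
  rw [commutatorElement_def]
  rw [mul_inv_eq_iff_eq_mul, mul_inv_eq_iff_eq_mul]
  apply ext
  simp only [mul_val, e]
  have h1 : Matrix.single i m (1:ℤ) * Matrix.single m j (1:ℤ)
      = Matrix.single i j 1 := by
    rw [Matrix.single_mul_single_same]; norm_num
  have h2 : Matrix.single i j (1:ℤ) * Matrix.single m j (1:ℤ) = 0 := by
    apply Matrix.single_mul_single_of_ne; exact fun h => hjm (congrArg Fin.val h)
  have h3 : Matrix.single i j (1:ℤ) * Matrix.single i m (1:ℤ) = 0 := by
    apply Matrix.single_mul_single_of_ne; exact fun h => hji (congrArg Fin.val h)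
  have h4 : Matrix.single m j (1:ℤ) * Matrix.single i m (1:ℤ) = 0 := by
    apply Matrix.single_mul_single_of_ne; exact fun h => hji (congrArg Fin.val h)
  show Matrix.single i m (1:ℤ) + Matrix.single m j 1 + Matrix.single i m 1 * Matrix.single m j 1
      = (Matrix.single i j 1 + Matrix.single m j 1 + Matrix.single i j 1 * Matrix.single m j 1)
        + Matrix.single i m 1
        + (Matrix.single i j 1 + Matrix.single m j 1 + Matrix.single i j 1 * Matrix.single m j 1)
          * Matrix.single i m 1
  rw [h1, h2, add_zero, add_mul, h3, h4]
  abel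

theorem e_mem_derivedSeries (k : ℕ) :
    ∀ (i j : Fin n) (h2 : (i : ℕ) + 2 ^ k ≤ (j : ℕ)),
      e i j (by have := Nat.one_le_two_pow (n := k); omega) ∈ derivedSeries (Tg n) k := by
  induction k with
  | zero => intro i j _; trivial
  | succ k ih =>
    intro i j h2
    have hpow : 0 < 2 ^ k := Nat.pow_pos (by norm_num)
    have hm : (i : ℕ) + 2 ^ k < n := by
      have hj : (j : ℕ) < n := j.2
      have : 2 ^ (k + 1) = 2 ^ k + 2 ^ k := by ring
      omega
    set m : Fin n := ⟨(i : ℕ) + 2 ^ k, hm⟩ with hmdef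
    have h2k : 2 ^ (k + 1) = 2 ^ k + 2 ^ k := by ring
    have him : (i : ℕ) < (m : ℕ) := by show (i : ℕ) < (i : ℕ) + 2 ^ k; omega
    have hmj : (m : ℕ) < (j : ℕ) := by show (i : ℕ) + 2 ^ k < (j : ℕ); omega
    have hcomm := commutator_e him hmj
    rw [derivedSeries_succ, ← hcomm]
    exact Subgroup.commutator_mem_commutator
      (ih i m (le_refl _)) (ih m j (by show (i:ℕ) + 2 ^ k + 2 ^ k ≤ (j:ℕ); omega))

theorem not_isSolvable_pi : ¬ IsSolvable (∀ n, Tg n) := by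
  rintro ⟨k, hk⟩
  set N := 2 ^ k + 1 with hN
  have h1 : (1 : ℕ) ≤ 2 ^ k := Nat.one_le_two_pow
  have i0 : Fin N := ⟨0, by omega⟩
  have jk : Fin N := ⟨2 ^ k, by omega⟩
  set x : Tg N := e (⟨0, by omega⟩ : Fin N) (⟨2 ^ k, by omega⟩ : Fin N)
      (by show (0:ℕ) < 2 ^ k; omega) with hx
  have hmem : x ∈ derivedSeries (Tg N) k :=
    e_mem_derivedSeries k _ _ (by show (0:ℕ) + 2 ^ k ≤ 2 ^ k; omega)
  have hmap : (MonoidHom.mulSingle Tg N) x ∈ derivedSeries (∀ n, Tg n) k :=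
    map_derivedSeries_le_derivedSeries (MonoidHom.mulSingle Tg N) k
      ⟨x, hmem, rfl⟩
  rw [hk, Subgroup.mem_bot] at hmap
  rw [MonoidHom.mulSingle_apply] at hmap
  have hx1 : x = 1 := by
    have := congrFun hmap N
    rwa [Pi.mulSingle_eq_same] at this
  have : x.1 ⟨0, by omega⟩ ⟨2 ^ k, by omega⟩ = 0 := by rw [hx1]; rfl
  rw [hx] at this
  simp [e, Matrix.single] at this

end Tg

/-- There exists a skew brace whose additive group is abelian but whose multiplicative
group is not solvable. -/
theorem exists_skew_brace_add_abelian_mul_not_solvable :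
    ∃ (A : Type) (_ : AddGroup A) (_ : Group A),
      (∀ a b c : A, a * (b + c) = a * b + -a + a * c) ∧
      (∀ a b : A, a + b = b + a) ∧
      ¬ IsSolvable A := by
  refine ⟨∀ n, Tg n, inferInstance, inferInstance, ?_, ?_, Tg.not_isSolvable_pi⟩
  · intro a b c
    funext m
    apply Tg.ext
    show (a m).1 + ((b m).1 + (c m).1) + (a m).1 * ((b m).1 + (c m).1)
        = ((a m).1 + (b m).1 + (a m).1 * (b m).1) + -(a m).1
          + ((a m).1 + (c m).1 + (a m).1 * (c m).1)
    noncomm_ring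
  · intro a b
    exact add_comm a b
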